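/- Let E : Fin n → ℤ → ℝ be a family of functions, let k_min ≤ k_max be integers, and let T : Fin n → ℤ be a feasible allocation (i.e., k_min ≤ T i ≤ k_max for all i). Suppose there exist indices i, j with T i < k_max and T j > k_min such that E i (T i) - E i (T i + 1) > E j (T j - 1) - E j (T j). Then the allocation T' defined by T' i = T i + 1, T' j = T j - 1, and T' l = T l for l ∉ {i, j} (with i ≠ j) is feasible, satisfies ∑ l, T' l = ∑ l, T l, and has strictly smaller objective: ∑ l, E l (T' l) < ∑ l, E l (T l). -/

import Mathlib

lemma sum_split {n : ℕ} {M : Type*} [AddCommGroup M] (g g' : Fin n → M)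
    (i j : Fin n) (hij : i ≠ j) (h : ∀ l, l ≠ i → l ≠ j → g' l = g l) :
    ∑ l, g' l = (g' i - g i) + (g' j - g j) + ∑ l, g l := by
  classical
  have hi : i ∈ Finset.univ.erase j := Finset.mem_erase.2 ⟨hij, Finset.mem_univ i⟩
  have h1 : ∀ (f : Fin n → M), ∑ l, f l =
      f i + f j + ∑ l ∈ (Finset.univ.erase j).erase i, f l := by
    intro f
    rw [← Finset.add_sum_erase _ f (Finset.mem_univ j), ← Finset.add_sum_erase _ f hi]
    abel
  rw [h1 g', h1 g]
  have : ∑ l ∈ (Finset.univ.erase j).erase i, g' l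
      = ∑ l ∈ (Finset.univ.erase j).erase i, g l := by
    apply Finset.sum_congr rfl
    intro l hl
    simp only [Finset.mem_erase] at hl
    exact h l hl.1 hl.2.1
  rw [this]; abel

/-- A strictly-improving single-unit transfer preserves feasibility and the total
budget, and strictly decreases the objective. -/
theorem stmt0 {n : ℕ} (E : Fin n → ℤ → ℝ) (kmin kmax : ℤ) (hk : kmin ≤ kmax)
    (T : Fin n → ℤ) (hfeas : ∀ l, kmin ≤ T l ∧ T l ≤ kmax)
    (i j : Fin n) (hij : i ≠ j) (hi : T i < kmax) (hj : kmin < T j)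
    (hgain : E i (T i) - E i (T i + 1) > E j (T j - 1) - E j (T j))
    (T' : Fin n → ℤ)
    (hT'i : T' i = T i + 1) (hT'j : T' j = T j - 1)
    (hT'l : ∀ l, l ≠ i → l ≠ j → T' l = T l) :
    (∀ l, kmin ≤ T' l ∧ T' l ≤ kmax) ∧
    (∑ l, T' l = ∑ l, T l) ∧
    (∑ l, E l (T' l) < ∑ l, E l (T l)) := by
  refine ⟨?_, ?_, ?_⟩
  · intro l
    by_cases hli : l = i
    · subst hli; rw [hT'i]
      exact ⟨le_trans (hfeas l).1 (by omega), by omega⟩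
    by_cases hlj : l = j
    · subst hlj; rw [hT'j]
      exact ⟨by omega, le_trans (by omega) (hfeas l).2⟩
    · rw [hT'l l hli hlj]; exact hfeas l
  · rw [sum_split T T' i j hij hT'l, hT'i, hT'j]; ring
  · rw [sum_split (fun l => E l (T l)) (fun l => E l (T' l)) i j hij
      (fun l h1 h2 => by rw [hT'l l h1 h2])]
    simp only [hT'i, hT'j]
    linarith
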